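/- Let P be a finite p-group in CP₂ of exponent p^m with m ≥ 2, and suppose that for i ≤ j, Ω_i(Ω_j(P)) = Ω_i(P). Then ψ(P) = ψ(Ω_{m-t}(P)) + Σ_{i=1}^{t} |Ω_{m-i}(P)|·p^{m-i+1}·(|Ω_{m-i+1}(P)|/|Ω_{m-i}(P)| − 1) for any 1 ≤ t ≤ m−1. -/

import Mathlib

/-- Sum of the orders of the elements of a group. -/
noncomputable def psi (G : Type*) [Group G] : ℕ := ∑ᶠ x : G, orderOf x

/-- `Omega p G i` is the subgroup generated by all `x` with `x ^ p ^ i = 1`. -/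
def Omega (p : ℕ) (G : Type*) [Group G] (i : ℕ) : Subgroup G :=
  Subgroup.closure {x : G | x ^ p ^ i = 1}

/-- The class `CP₂`: `o(xy) ≤ max (o x) (o y)` for all `x y`. -/
def CP2 (G : Type*) [Group G] : Prop :=
  ∀ x y : G, orderOf (x * y) ≤ max (orderOf x) (orderOf y)

lemma mem_Omega_iff {p : ℕ} (hp : p.Prime) {P : Type*} [Group P]
    (hP : IsPGroup p P) (hcp : CP2 P) (k : ℕ) (x : P) :
    x ∈ Omega p P k ↔ x ^ p ^ k = 1 := by
  haveI : Fact p.Prime := ⟨hp⟩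
  have hpos : 0 < p ^ k := Nat.pow_pos hp.pos
  have key : ∀ a b : P, a ^ p ^ k = 1 → b ^ p ^ k = 1 → (a * b) ^ p ^ k = 1 := by
    intro a b ha hb
    obtain ⟨j, hj⟩ := (IsPGroup.iff_orderOf.mp hP) (a * b)
    have h1 : orderOf (a * b) ≤ max (orderOf a) (orderOf b) := hcp a b
    have h2 : orderOf a ≤ p ^ k :=
      Nat.le_of_dvd hpos (orderOf_dvd_of_pow_eq_one ha)
    have h3 : orderOf b ≤ p ^ k :=
      Nat.le_of_dvd hpos (orderOf_dvd_of_pow_eq_one hb)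
    have h4 : p ^ j ≤ p ^ k := hj ▸ le_trans h1 (max_le h2 h3)
    have h5 : j ≤ k := (Nat.pow_le_pow_iff_right hp.one_lt).mp h4
    exact orderOf_dvd_iff_pow_eq_one.mp (hj ▸ pow_dvd_pow p h5)
  let K : Subgroup P :=
    { carrier := {x : P | x ^ p ^ k = 1}
      mul_mem' := fun ha hb => key _ _ ha hb
      one_mem' := one_pow _
      inv_mem' := fun ha => by
        simp only [Set.mem_setOf_eq, inv_pow] at *
        rw [ha, inv_one] }
  have : Omega p P k = K := by
    show Subgroup.closure (K : Set P) = K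
    exact Subgroup.closure_eq K
  rw [this]; rfl

theorem stmt_15 {p m t : ℕ} (hp : p.Prime) (P : Type*) [Group P] [Finite P]
    (hP : IsPGroup p P) (hcp : CP2 P) (hexp : Monoid.exponent P = p ^ m)
    (hm : 2 ≤ m)
    (hOmega : ∀ i j : ℕ, i ≤ j →
      (Omega p (Omega p P j) i).map (Omega p P j).subtype = Omega p P i)
    (ht1 : 1 ≤ t) (ht2 : t ≤ m - 1) :
    psi P = psi (Omega p P (m - t)) + ∑ i ∈ Finset.Icc 1 t,
      Nat.card (Omega p P (m - i)) * p ^ (m - i + 1) *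
        (Nat.card (Omega p P (m - i + 1)) / Nat.card (Omega p P (m - i)) - 1) := by
  classical
  haveI : Fintype P := Fintype.ofFinite P
  have hmem := mem_Omega_iff hp hP hcp
  set F : ℕ → Finset P := fun k => Finset.univ.filter (fun x => x ^ p ^ k = 1) with hF
  have hNF : ∀ k, Nat.card (Omega p P k) = (F k).card := by
    intro k
    rw [Nat.card_eq_fintype_card,
      Fintype.card_congr (Equiv.subtypeEquivRight (fun x => hmem k x))]
    simp [hF, Fintype.card_subtype]
  have hpsiF : ∀ k, psi (Omega p P k) = ∑ x ∈ F k, orderOf x := by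
    intro k
    rw [psi, finsum_eq_sum_of_fintype]
    rw [Fintype.sum_equiv (Equiv.subtypeEquivRight (fun x => hmem k x))
      _ (fun x : {x : P // x ^ p ^ k = 1} => orderOf (x : P))]
    · exact (Finset.sum_subtype _ (fun x => by simp [hF]) orderOf).symm
    · intro x
      simp only [Equiv.subtypeEquivRight_apply]
      exact (orderOf_injective (Omega p P k).subtype (Subgroup.subtype_injective _) x).symm
  have hFsub : ∀ k, F k ⊆ F (k + 1) := by
    intro k x hx
    simp only [hF, Finset.mem_filter, Finset.mem_univ, true_and] at *
    rw [pow_succ, pow_mul, hx, one_pow]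
  have hstep : ∀ k, (∑ x ∈ F (k + 1), orderOf x)
      = (∑ x ∈ F k, orderOf x) + ((F (k + 1)).card - (F k).card) * p ^ (k + 1) := by
    intro k
    have hord : ∀ x ∈ F (k + 1) \ F k, orderOf x = p ^ (k + 1) := by
      intro x hx
      simp only [hF, Finset.mem_sdiff, Finset.mem_filter, Finset.mem_univ, true_and] at hx
      obtain ⟨hx1, hx2⟩ := hx
      obtain ⟨j, hjle, hj⟩ := (Nat.dvd_prime_pow hp).mp (orderOf_dvd_of_pow_eq_one hx1)
      rw [hj]
      congr 1
      by_contra hne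
      have hjk : j ≤ k := by omega
      exact hx2 (orderOf_dvd_iff_pow_eq_one.mp (hj ▸ pow_dvd_pow p hjk))
    have hsd : ∑ x ∈ F (k + 1) \ F k, orderOf x
        = ((F (k + 1)).card - (F k).card) * p ^ (k + 1) := by
      rw [Finset.sum_congr rfl hord, Finset.sum_const, smul_eq_mul,
        Finset.card_sdiff_of_subset (hFsub k)]
    rw [← Finset.sum_sdiff (hFsub k), hsd, add_comm]
  have htop : psi P = ∑ x ∈ F m, orderOf x := by
    rw [psi, finsum_eq_sum_of_fintype]
    refine (Finset.sum_subset (Finset.subset_univ _) ?_).symm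
    intro x _ hx
    exfalso
    apply hx
    simp only [hF, Finset.mem_filter, Finset.mem_univ, true_and]
    rw [← hexp]
    exact Monoid.pow_exponent_eq_one x
  have main : ∀ s, s ≤ m → psi P = psi (Omega p P (m - s)) + ∑ i ∈ Finset.Icc 1 s,
      ((F (m - i + 1)).card - (F (m - i)).card) * p ^ (m - i + 1) := by
    intro s
    induction s with
    | zero => intro _; simp [htop, hpsiF]
    | succ s ih =>
      intro hsm
      have hms : m - (s + 1) + 1 = m - s := by omega
      rw [ih (by omega), Finset.sum_Icc_succ_top (by omega),
        hpsiF (m - s), hpsiF (m - (s + 1))]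
      have h2 := hstep (m - (s + 1))
      rw [hms] at h2
      rw [h2, hms]
      ring
  rw [main t (by omega)]
  congr 1
  apply Finset.sum_congr rfl
  intro i hi
  simp only [Finset.mem_Icc] at hi
  have hle : Omega p P (m - i) ≤ Omega p P (m - i + 1) := by
    intro x hx
    rw [hmem] at *
    rw [pow_succ, pow_mul, hx, one_pow]
  have hdvd : (F (m - i)).card ∣ (F (m - i + 1)).card := by
    rw [← hNF, ← hNF]; exact Subgroup.card_dvd_of_le hle
  have hpos : 0 < (F (m - i)).card := by rw [← hNF]; exact Nat.card_pos
  have hpos2 : 0 < (F (m - i + 1)).card := by rw [← hNF]; exact Nat.card_pos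
  rw [hNF, hNF]
  obtain ⟨c, hc⟩ := hdvd
  rw [hc, Nat.mul_div_cancel_left c hpos]
  rcases c with _ | d
  · simp only [Nat.mul_zero] at hc; omega
  · simp only [Nat.mul_succ, Nat.add_sub_cancel, Nat.succ_sub_one]
    ring
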